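/- arXiv:1612.06914 — 2 statements merged into one kernel-verified Lean document; each statement's English description precedes it below -/
import Mathlib

section
/- For any ε > 0 there exists δ > 0 such that: if (e_1,…,e_d) are vectors in ℝ^{2d}, each e_i being δ-close to the standard basis vector E_i, and the e_i span a Lagrangian subspace, then there exists a symplectic matrix A ∈ Sp(2d,ℝ) with ‖A − Id‖ < ε and A(e_i) = E_i for i = 1,…,d. -/
open Matrix

/-- The standard symplectic matrix `J = [[0, I],[-I, 0]]`. -/
noncomputable def Jmat (d : ℕ) : Matrix (Fin d ⊕ Fin d) (Fin d ⊕ Fin d) ℝ :=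
  Matrix.fromBlocks 0 1 (-1) 0

/-- `M ∈ Sp(2d, ℝ)`: `Mᵀ J M = J`. -/
def IsSymplectic {d : ℕ} (M : Matrix (Fin d ⊕ Fin d) (Fin d ⊕ Fin d) ℝ) : Prop :=
  Mᵀ * Jmat d * M = Jmat d

/-- The standard symplectic form `ω(u,v) = uᵀ J v` on `ℝ^{2d}`. -/
noncomputable def omegaForm {d : ℕ} (u v : Fin d ⊕ Fin d → ℝ) : ℝ :=
  u ⬝ᵥ (Jmat d).mulVec v

/-- A subspace of `ℝ^{2d}` is Lagrangian if it has dimension `d` and `ω` vanishes on it. -/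
def IsLagrangian {d : ℕ} (L : Submodule ℝ (Fin d ⊕ Fin d → ℝ)) : Prop :=
  Module.finrank ℝ L = d ∧ ∀ u ∈ L, ∀ v ∈ L, omegaForm u v = 0

/-- The standard basis vectors of `ℝ^{2d}`. -/
noncomputable def stdE (d : ℕ) (i : Fin d ⊕ Fin d) : Fin d ⊕ Fin d → ℝ :=
  Pi.single i 1

/-- The `ℓ²`-operator norm of a square real matrix. -/
noncomputable def opNorm {ι : Type} [Fintype ι] [DecidableEq ι] (M : Matrix ι ι ℝ) : ℝ :=
  ‖Matrix.toEuclideanCLM (𝕜 := ℝ) M‖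

/- ### auxiliary construction -/

variable {d : ℕ}

noncomputable def Xmat (e : Fin d → (Fin d ⊕ Fin d → ℝ)) : Matrix (Fin d) (Fin d) ℝ :=
  Matrix.of fun i j => e j (Sum.inl i)

noncomputable def Ymat (e : Fin d → (Fin d ⊕ Fin d → ℝ)) : Matrix (Fin d) (Fin d) ℝ :=
  Matrix.of fun i j => e j (Sum.inr i)

noncomputable def Smat (e : Fin d → (Fin d ⊕ Fin d → ℝ)) : Matrix (Fin d) (Fin d) ℝ :=
  (Xmat e)ᵀ * Xmat e + (Ymat e)ᵀ * Ymat e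

noncomputable def Mmat (e : Fin d → (Fin d ⊕ Fin d → ℝ)) :
    Matrix (Fin d ⊕ Fin d) (Fin d ⊕ Fin d) ℝ :=
  fromBlocks (Xmat e) (-(Ymat e * (Smat e)⁻¹)) (Ymat e) (Xmat e * (Smat e)⁻¹)

noncomputable def Amat (e : Fin d → (Fin d ⊕ Fin d → ℝ)) :
    Matrix (Fin d ⊕ Fin d) (Fin d ⊕ Fin d) ℝ :=
  (Mmat e)⁻¹

noncomputable def e0 (d : ℕ) : Fin d → (Fin d ⊕ Fin d → ℝ) := fun i => stdE d (Sum.inl i)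

lemma Smat_transpose (e : Fin d → (Fin d ⊕ Fin d → ℝ)) : (Smat e)ᵀ = Smat e := by
  simp [Smat, transpose_add, transpose_mul]

lemma Mmat_symplectic (e : Fin d → (Fin d ⊕ Fin d → ℝ))
    (H : (Xmat e)ᵀ * Ymat e = (Ymat e)ᵀ * Xmat e) (hS : IsUnit (Smat e).det) :
    IsSymplectic (Mmat e) := by
  have hGt : (Smat e)⁻¹ᵀ = (Smat e)⁻¹ := by
    rw [transpose_nonsing_inv, Smat_transpose]
  have hSG : Smat e * (Smat e)⁻¹ = 1 := Matrix.mul_nonsing_inv _ hS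
  have hGS : (Smat e)⁻¹ * Smat e = 1 := Matrix.nonsing_inv_mul _ hS
  have hS' : (Xmat e)ᵀ * Xmat e + (Ymat e)ᵀ * Ymat e = Smat e := rfl
  unfold IsSymplectic Jmat Mmat
  rw [Matrix.fromBlocks_transpose, Matrix.fromBlocks_multiply, Matrix.fromBlocks_multiply]
  rw [Matrix.fromBlocks_inj]
  refine ⟨?_, ?_, ?_, ?_⟩ <;>
    simp only [Matrix.mul_zero, Matrix.mul_neg, Matrix.mul_one, zero_add,
      add_zero, Matrix.neg_mul, Matrix.zero_mul, Matrix.one_mul, Matrix.transpose_neg,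
      Matrix.transpose_mul, neg_neg]
  · rw [H]; abel
  · rw [← Matrix.mul_assoc, ← Matrix.mul_assoc, ← Matrix.add_mul, add_comm, hS', hSG]
  · rw [hGt, Matrix.mul_assoc, Matrix.mul_assoc, ← neg_add, ← Matrix.mul_add, hS', hGS]
  · rw [hGt]
    have key : (Smat e)⁻¹ * (Xmat e)ᵀ * (Ymat e * (Smat e)⁻¹)
        = (Smat e)⁻¹ * (Ymat e)ᵀ * (Xmat e * (Smat e)⁻¹) := by
      rw [Matrix.mul_assoc, Matrix.mul_assoc, ← Matrix.mul_assoc (Xmat e)ᵀ, H,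
        Matrix.mul_assoc]
    rw [key]; abel

lemma Jmat_mul_right_inv : Jmat d * fromBlocks 0 (-1) 1 0 = 1 := by
  unfold Jmat
  rw [Matrix.fromBlocks_multiply]
  simp [← Matrix.fromBlocks_one]

lemma isUnit_det_of_symplectic {M : Matrix (Fin d ⊕ Fin d) (Fin d ⊕ Fin d) ℝ}
    (h : IsSymplectic M) : IsUnit M.det := by
  have hJ : IsUnit (Jmat d).det := Matrix.isUnit_det_of_right_inverse Jmat_mul_right_inv
  have := congrArg Matrix.det h
  rw [Matrix.det_mul, Matrix.det_mul, Matrix.det_transpose] at this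
  have hJ0 : (Jmat d).det ≠ 0 := hJ.ne_zero
  have hMM : M.det * M.det = 1 := by
    have h2 : (M.det * M.det) * (Jmat d).det = 1 * (Jmat d).det := by
      rw [one_mul]
      calc (M.det * M.det) * (Jmat d).det = M.det * (Jmat d).det * M.det := by ring
        _ = (Jmat d).det := this
    exact mul_right_cancel₀ hJ0 h2
  exact IsUnit.of_mul_eq_one _ hMM

lemma inv_symplectic {M : Matrix (Fin d ⊕ Fin d) (Fin d ⊕ Fin d) ℝ}
    (h : IsSymplectic M) : IsSymplectic M⁻¹ := by
  have hM : IsUnit M.det := isUnit_det_of_symplectic h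
  have hMt : IsUnit Mᵀ.det := by rwa [Matrix.det_transpose]
  unfold IsSymplectic
  rw [Matrix.transpose_nonsing_inv]
  calc Mᵀ⁻¹ * Jmat d * M⁻¹ = Mᵀ⁻¹ * (Mᵀ * Jmat d * M) * M⁻¹ := by rw [h]
    _ = (Mᵀ⁻¹ * Mᵀ) * Jmat d * (M * M⁻¹) := by
        simp only [Matrix.mul_assoc]
    _ = Jmat d := by
        rw [Matrix.nonsing_inv_mul _ hMt, Matrix.mul_nonsing_inv _ hM, Matrix.one_mul,
          Matrix.mul_one]

lemma Mmat_mulVec_std (e : Fin d → (Fin d ⊕ Fin d → ℝ)) (i : Fin d) :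
    (Mmat e).mulVec (stdE d (Sum.inl i)) = e i := by
  unfold stdE
  rw [Matrix.mulVec_single]
  funext j
  cases j with
  | inl k => simp [Mmat, Xmat]
  | inr k => simp [Mmat, Ymat]

lemma Xmat_e0 : Xmat (e0 d) = 1 := by
  ext i j
  simp [Xmat, e0, stdE, Pi.single_apply, Matrix.one_apply, eq_comm]

lemma Ymat_e0 : Ymat (e0 d) = 0 := by
  ext i j
  simp [Ymat, e0, stdE, Pi.single_apply]

lemma Smat_e0 : Smat (e0 d) = 1 := by
  simp [Smat, Xmat_e0, Ymat_e0]

lemma Mmat_e0 : Mmat (e0 d) = 1 := by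
  rw [Mmat, Xmat_e0, Ymat_e0, Smat_e0, ← Matrix.fromBlocks_one]
  simp

lemma continuous_Xmat : Continuous (Xmat (d := d)) :=
  continuous_pi fun i => continuous_pi fun j =>
    (continuous_apply (Sum.inl i)).comp (continuous_apply j)

lemma continuous_Ymat : Continuous (Ymat (d := d)) :=
  continuous_pi fun i => continuous_pi fun j =>
    (continuous_apply (Sum.inr i)).comp (continuous_apply j)

lemma continuous_Smat : Continuous (Smat (d := d)) :=
  (continuous_Xmat.matrix_transpose.matrix_mul continuous_Xmat).add
    (continuous_Ymat.matrix_transpose.matrix_mul continuous_Ymat)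

lemma continuousAt_inv_of_det_one {ι : Type} [Fintype ι] [DecidableEq ι]
    {M : Matrix ι ι ℝ} (h : M.det = 1) : ContinuousAt Inv.inv M := by
  apply continuousAt_matrix_inv
  rw [h]
  exact NormedRing.inverse_continuousAt (1 : ℝˣ)

lemma continuousAt_Amat : ContinuousAt (Amat (d := d)) (e0 d) := by
  have hSinv : ContinuousAt (fun e => (Smat (d := d) e)⁻¹) (e0 d) := by
    exact (continuousAt_inv_of_det_one (by rw [Smat_e0, Matrix.det_one])).comp
      continuous_Smat.continuousAt
  have hF : Continuous (fun p : (Fin d → (Fin d ⊕ Fin d → ℝ)) × Matrix (Fin d) (Fin d) ℝ =>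
      fromBlocks (Xmat p.1) (-(Ymat p.1 * p.2)) (Ymat p.1) (Xmat p.1 * p.2)) := by
    exact Continuous.matrix_fromBlocks (continuous_Xmat.comp continuous_fst)
      (((continuous_Ymat.comp continuous_fst).matrix_mul continuous_snd).neg)
      (continuous_Ymat.comp continuous_fst)
      ((continuous_Xmat.comp continuous_fst).matrix_mul continuous_snd)
  have hM : ContinuousAt (Mmat (d := d)) (e0 d) :=
    hF.continuousAt.comp (continuousAt_id.prodMk hSinv)
  exact (continuousAt_inv_of_det_one (by rw [Mmat_e0, Matrix.det_one])).comp hM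

lemma omegaForm_eq (u v : Fin d ⊕ Fin d → ℝ) :
    omegaForm u v = (∑ k : Fin d, u (Sum.inl k) * v (Sum.inr k))
      - ∑ k : Fin d, u (Sum.inr k) * v (Sum.inl k) := by
  simp [omegaForm, Jmat, dotProduct, Matrix.mulVec, Fintype.sum_sum_type, Matrix.one_apply,
    Finset.mul_sum, mul_ite, Finset.sum_ite_eq, Finset.sum_ite_eq', sub_eq_add_neg,
    ← Finset.sum_neg_distrib, mul_comm]
  refine Finset.sum_congr rfl fun k _ => ?_
  rw [Finset.sum_neg_distrib, Finset.sum_ite_eq]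
  simp

lemma XtY_eq (e : Fin d → (Fin d ⊕ Fin d → ℝ))
    (h : ∀ i j, omegaForm (e i) (e j) = 0) :
    (Xmat e)ᵀ * Ymat e = (Ymat e)ᵀ * Xmat e := by
  ext i j
  have := h i j
  rw [omegaForm_eq, sub_eq_zero] at this
  simp only [Matrix.mul_apply, Matrix.transpose_apply, Xmat, Ymat, Matrix.of_apply]
  exact this


/-- For any `ε > 0` there is `δ > 0` such that any family `(e_1,…,e_d)` of vectors
`δ`-close to the first `d` standard basis vectors and spanning a Lagrangian subspace
can be sent to the standard basis vectors by a symplectic matrix `ε`-close to the identity. -/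
theorem stmt2 {d : ℕ} :
    ∀ ε > (0 : ℝ), ∃ δ > (0 : ℝ),
      ∀ e : Fin d → (Fin d ⊕ Fin d → ℝ),
        (∀ i : Fin d, ‖e i - stdE d (Sum.inl i)‖ < δ) →
        IsLagrangian (Submodule.span ℝ (Set.range e)) →
        ∃ A : Matrix (Fin d ⊕ Fin d) (Fin d ⊕ Fin d) ℝ,
          IsSymplectic A ∧ opNorm (A - 1) < ε ∧ ∀ i : Fin d, A.mulVec (e i) = stdE d (Sum.inl i) := by
  intro ε hε
  have hlin : Continuous (fun M : Matrix (Fin d ⊕ Fin d) (Fin d ⊕ Fin d) ℝ =>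
      Matrix.toEuclideanCLM (𝕜 := ℝ) M) := by
    exact LinearMap.continuous_of_finiteDimensional
      { toFun := fun M => Matrix.toEuclideanCLM (𝕜 := ℝ) M
        map_add' := fun a b => map_add _ a b
        map_smul' := fun c a => map_smul _ c a }
  have hΦ : ContinuousAt (fun e => opNorm (Amat (d := d) e - 1)) (e0 d) := by
    exact (continuous_norm.comp hlin).continuousAt.comp
      (continuousAt_Amat.sub continuousAt_const)
  have h0 : opNorm (Amat (e0 d) - 1) = 0 := by
    rw [Amat, Mmat_e0, inv_one, sub_self]
    simp only [opNorm, map_zero, norm_zero]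
  have h1 : {e | opNorm (Amat (d := d) e - 1) < ε} ∈ nhds (e0 d) :=
    hΦ (Iio_mem_nhds (by show opNorm (Amat (e0 d) - 1) < ε; rw [h0]; exact hε))
  have h2 : {e | (Smat (d := d) e).det ≠ 0} ∈ nhds (e0 d) :=
    (continuous_Smat.matrix_det.continuousAt) (isOpen_ne.mem_nhds (by
      show (Smat (e0 d)).det ≠ 0
      rw [Smat_e0, Matrix.det_one]; exact one_ne_zero))
  obtain ⟨δ, hδpos, hball⟩ := Metric.mem_nhds_iff.mp (Filter.inter_mem h1 h2)
  refine ⟨δ, hδpos, ?_⟩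
  intro e he hLag
  have hmem : e ∈ Metric.ball (e0 d) δ := by
    rw [Metric.mem_ball, dist_pi_lt_iff hδpos]
    intro i
    rw [dist_eq_norm]
    exact he i
  obtain ⟨hΦe, hdet⟩ := hball hmem
  have hS : IsUnit (Smat e).det := isUnit_iff_ne_zero.mpr hdet
  have H : (Xmat e)ᵀ * Ymat e = (Ymat e)ᵀ * Xmat e :=
    XtY_eq e fun i j => hLag.2 _ (Submodule.subset_span ⟨i, rfl⟩) _
      (Submodule.subset_span ⟨j, rfl⟩)
  have hMsym := Mmat_symplectic e H hS
  have hMdet := isUnit_det_of_symplectic hMsym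
  refine ⟨Amat e, inv_symplectic hMsym, hΦe, ?_⟩
  intro i
  rw [← Mmat_mulVec_std e i, Matrix.mulVec_mulVec, Amat,
    Matrix.nonsing_inv_mul _ hMdet, Matrix.one_mulVec]
end

section
/- Pliss-type combinatorial lemma: Let C > 1, let m₀, N₀ ≥ 1 with m₀ ≥ N₀, and let Ñ ≥ 2m₀²(log C + 2)/log(3/2). Suppose a₁,…,a_n are positive reals with each a_i ≤ C² and with product a₁⋯a_n > 1/2, where n ≥ Ñ. Then there exists an index i₀ with 1 ≤ i₀ ≤ n − m₀ such that a_{i₀}⋯a_{i₀+N₀−1} > 2/3 and a_{i₀}⋯a_{i₀+m₀−1} > 2/3. -/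
/-- Pliss-type combinatorial lemma: from a long product of uniformly bounded positive numbers
exceeding `1/2`, one finds a position where the partial products of lengths `N₀` and `m₀`
both exceed `2/3`. -/
theorem stmt11 (C : ℝ) (hC : 1 < C) (m0 N0 : ℕ) (hN0 : 1 ≤ N0) (hm : N0 ≤ m0)
    (n : ℕ) (hn : (n : ℝ) ≥ 2 * (m0 : ℝ) ^ 2 * (Real.log C + 2) / Real.log (3 / 2))
    (a : ℕ → ℝ) (hpos : ∀ i ∈ Finset.Icc 1 n, 0 < a i)
    (hbd : ∀ i ∈ Finset.Icc 1 n, a i ≤ C ^ 2)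
    (hprod : (1 : ℝ) / 2 < ∏ i ∈ Finset.Icc 1 n, a i) :
    ∃ i0 : ℕ, 1 ≤ i0 ∧ i0 ≤ n - m0 ∧
      (2 : ℝ) / 3 < ∏ i ∈ Finset.Ico i0 (i0 + N0), a i ∧
      (2 : ℝ) / 3 < ∏ i ∈ Finset.Ico i0 (i0 + m0), a i := by
  have hC0 : (0:ℝ) < C := lt_trans one_pos hC
  have hlogC : 0 < Real.log C := Real.log_pos hC
  have hl32 : 0 < Real.log (3/2) := Real.log_pos (by norm_num)
  have hm0 : 1 ≤ m0 := le_trans hN0 hm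
  -- positivity of segment products
  have hseg_pos : ∀ p q : ℕ, 1 ≤ p → q ≤ n + 1 → 0 < ∏ i ∈ Finset.Ico p q, a i := by
    intro p q hp hq
    apply Finset.prod_pos
    intro i hi
    rw [Finset.mem_Ico] at hi
    exact hpos i (Finset.mem_Icc.mpr ⟨le_trans hp hi.1, by omega⟩)
  -- main bound: if the prefix product up to k is small, contradiction machinery
  have hprodIco : (1:ℝ)/2 < ∏ i ∈ Finset.Ico 1 (n+1), a i := by
    rwa [Finset.Ico_add_one_right_eq_Icc]
  have main_bound : ∀ (t k M : ℕ), k ≤ n → n - k ≤ M →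
      (∏ i ∈ Finset.Ico 1 (k+1), a i) ≤ (2/3:ℝ)^t →
      (1:ℝ)/2 < (2/3:ℝ)^t * C^(2*M) := by
    intro t k M hkn hnkM hPk
    have hsplit : (∏ i ∈ Finset.Ico 1 (k+1), a i) * ∏ i ∈ Finset.Ico (k+1) (n+1), a i
        = ∏ i ∈ Finset.Ico 1 (n+1), a i :=
      Finset.prod_Ico_consecutive a (by omega) (by omega)
    have htail : (∏ i ∈ Finset.Ico (k+1) (n+1), a i) ≤ (C^2)^(n-k) := by
      have : (∏ i ∈ Finset.Ico (k+1) (n+1), a i) ≤ ∏ _i ∈ Finset.Ico (k+1) (n+1), C^2 := by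
        apply Finset.prod_le_prod
        · intro i hi
          rw [Finset.mem_Ico] at hi
          exact le_of_lt (hpos i (Finset.mem_Icc.mpr ⟨by omega, by omega⟩))
        · intro i hi
          rw [Finset.mem_Ico] at hi
          exact hbd i (Finset.mem_Icc.mpr ⟨by omega, by omega⟩)
      rwa [Finset.prod_const, Nat.card_Ico, show n + 1 - (k+1) = n - k by omega] at this
    have hC2 : (1:ℝ) ≤ C^2 := by nlinarith
    have htail2 : (∏ i ∈ Finset.Ico (k+1) (n+1), a i) ≤ C^(2*M) := by
      calc (∏ i ∈ Finset.Ico (k+1) (n+1), a i) ≤ (C^2)^(n-k) := htail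
        _ ≤ (C^2)^M := pow_le_pow_right₀ hC2 hnkM
        _ = C^(2*M) := by rw [← pow_mul]
    have htpos : (0:ℝ) < ∏ i ∈ Finset.Ico (k+1) (n+1), a i := hseg_pos _ _ (by omega) le_rfl
    have hPk0 : (0:ℝ) < ∏ i ∈ Finset.Ico 1 (k+1), a i := hseg_pos _ _ le_rfl (by omega)
    calc (1:ℝ)/2 < ∏ i ∈ Finset.Ico 1 (n+1), a i := hprodIco
      _ = (∏ i ∈ Finset.Ico 1 (k+1), a i) * ∏ i ∈ Finset.Ico (k+1) (n+1), a i := hsplit.symm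
      _ ≤ (2/3:ℝ)^t * C^(2*M) := by
          apply mul_le_mul hPk htail2 (le_of_lt htpos) (by positivity)
  -- the descending chain
  have key : ∀ t : ℕ,
      (∃ i0 : ℕ, 1 ≤ i0 ∧ i0 ≤ n - m0 ∧
        (2 : ℝ) / 3 < ∏ i ∈ Finset.Ico i0 (i0 + N0), a i ∧
        (2 : ℝ) / 3 < ∏ i ∈ Finset.Ico i0 (i0 + m0), a i) ∨
      (∃ k : ℕ, k ≤ t * m0 ∧ k ≤ n ∧ (∏ i ∈ Finset.Ico 1 (k+1), a i) ≤ (2/3:ℝ)^t) := by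
    intro t
    induction t with
    | zero =>
      right
      exact ⟨0, by simp, Nat.zero_le n, by simp⟩
    | succ t ih =>
      rcases ih with h | ⟨k, hk1, hk2, hk3⟩
      · exact Or.inl h
      by_cases hterm : k + m0 < n
      · -- can take a step
        by_cases hgood : (2:ℝ)/3 < (∏ i ∈ Finset.Ico (k+1) (k+1+N0), a i) ∧
            (2:ℝ)/3 < (∏ i ∈ Finset.Ico (k+1) (k+1+m0), a i)
        · exact Or.inl ⟨k+1, by omega, by omega, hgood.1, hgood.2⟩
        · right
          push_neg at hgood
          have hstep : ∃ j : ℕ, 1 ≤ j ∧ j ≤ m0 ∧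
              (∏ i ∈ Finset.Ico (k+1) (k+1+j), a i) ≤ (2:ℝ)/3 := by
            by_cases h1 : (2:ℝ)/3 < ∏ i ∈ Finset.Ico (k+1) (k+1+N0), a i
            · exact ⟨m0, hm0, le_rfl, hgood h1⟩
            · exact ⟨N0, hN0, hm, le_of_not_gt h1⟩
          obtain ⟨j, hj1, hj2, hj3⟩ := hstep
          refine ⟨k + j, by nlinarith [hk1], by omega, ?_⟩
          have hsplit : (∏ i ∈ Finset.Ico 1 (k+1), a i) * ∏ i ∈ Finset.Ico (k+1) (k+j+1), a i
              = ∏ i ∈ Finset.Ico 1 (k+j+1), a i :=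
            Finset.prod_Ico_consecutive a (by omega) (by omega)
          have hPk0 : (0:ℝ) < ∏ i ∈ Finset.Ico 1 (k+1), a i := hseg_pos _ _ le_rfl (by omega)
          have : (∏ i ∈ Finset.Ico 1 (k+j+1), a i)
              ≤ (2/3:ℝ)^t * (2/3) := by
            rw [← hsplit]
            have hj3' : (∏ i ∈ Finset.Ico (k+1) (k+j+1), a i) ≤ (2:ℝ)/3 := by
              rwa [show k+1+j = k+j+1 by omega] at hj3
            have hsp : (0:ℝ) < ∏ i ∈ Finset.Ico (k+1) (k+j+1), a i :=
              hseg_pos _ _ (by omega) (by omega)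
            apply mul_le_mul hk3 hj3' (le_of_lt hsp) (by positivity)
          calc (∏ i ∈ Finset.Ico 1 (k+j+1), a i) ≤ (2/3:ℝ)^t * (2/3) := this
            _ = (2/3:ℝ)^(t+1) := by ring
      · -- terminal case: contradiction
        exfalso
        push_neg at hterm
        -- t is large
        have hnt : (n:ℝ) ≤ ((t:ℝ)+1) * m0 := by
          have : n ≤ (t+1) * m0 := by
            calc n ≤ k + m0 := hterm
              _ ≤ t * m0 + m0 := by omega
              _ = (t+1) * m0 := by ring
          exact_mod_cast this
        have hm0R : (0:ℝ) < m0 := by exact_mod_cast hm0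
        have ht_big : 2 * (m0:ℝ) * (Real.log C + 2) / Real.log (3/2) ≤ (t:ℝ) + 1 := by
          rw [ge_iff_le, div_le_iff₀ hl32] at hn
          rw [div_le_iff₀ hl32]
          nlinarith [hn, hnt]
        -- log inequality
        have hlog : Real.log 2 + (2*m0 : ℕ) * Real.log C < t * Real.log (3/2) := by
          have h2 : Real.log 2 ≤ 1 := by
            have := Real.log_le_sub_one_of_pos (by norm_num : (0:ℝ) < 2)
            linarith
          have h32 : Real.log (3/2) ≤ 1/2 := by
            have := Real.log_le_sub_one_of_pos (by norm_num : (0:ℝ) < 3/2)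
            linarith
          have ht' : 2 * (m0:ℝ) * (Real.log C + 2) ≤ ((t:ℝ)+1) * Real.log (3/2) := by
            rw [div_le_iff₀ hl32] at ht_big
            linarith
          have hm1 : (1:ℝ) ≤ m0 := by exact_mod_cast hm0
          push_cast
          nlinarith
        -- convert to powers
        have hpow : 2 * C^(2*m0) < (3/2:ℝ)^t := by
          have hx : (0:ℝ) < 2 * C^(2*m0) := by positivity
          have : Real.log (2 * C^(2*m0)) < Real.log ((3/2:ℝ)^t) := by
            rw [Real.log_mul (by norm_num) (by positivity), Real.log_pow, Real.log_pow]
            exact_mod_cast hlog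
          exact (Real.log_lt_log_iff hx (by positivity)).mp this
        have hmb := main_bound t k m0 hk2 (by omega) hk3
        have h23 : ((2:ℝ)/3)^t * ((3/2:ℝ))^t = 1 := by
          rw [← mul_pow]; norm_num
        have hp1 : (0:ℝ) < ((3/2:ℝ))^t := by positivity
        have hp2 : (0:ℝ) < ((2:ℝ)/3)^t := by positivity
        nlinarith [mul_lt_mul_of_pos_left hpow hp2]
  -- conclude
  obtain ⟨t, ht⟩ := exists_pow_lt_of_lt_one
    (show (0:ℝ) < (1/2) * (C^(2*n))⁻¹ by positivity) (show (2:ℝ)/3 < 1 by norm_num)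
  rcases key t with h | ⟨k, _, hk2, hk3⟩
  · exact h
  · exfalso
    have hmb := main_bound t k n hk2 (by omega) hk3
    have hCn : (0:ℝ) < C^(2*n) := by positivity
    have : ((2:ℝ)/3)^t * C^(2*n) < (1/2) * (C^(2*n))⁻¹ * C^(2*n) :=
      mul_lt_mul_of_pos_right ht hCn
    rw [mul_assoc, inv_mul_cancel₀ (ne_of_gt hCn), mul_one] at this
    linarith
end
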